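/- The family I = {X ⊆ 2^ω : for every continuous F : 2^ω → 2^ω, F''(X) ≠ 2^ω} is a σ-ideal: it is closed under subsets and countable unions, and contains all singletons. -/

import Mathlib

/-- The family of subsets of Cantor space no continuous image of which is all of `2^ω`. -/
def contIdeal : Set (Set (ℕ → Bool)) :=
  {X | ∀ F : (ℕ → Bool) → (ℕ → Bool), Continuous F → F '' X ≠ Set.univ}

/-- `contIdeal` is a σ-ideal: closed under subsets and countable unions, and it
contains all singletons. -/
theorem stmt8 :
    (∀ X Y : Set (ℕ → Bool), Y ⊆ X → X ∈ contIdeal → Y ∈ contIdeal) ∧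
    (∀ X : ℕ → Set (ℕ → Bool), (∀ n, X n ∈ contIdeal) → (⋃ n, X n) ∈ contIdeal) ∧
    (∀ x : ℕ → Bool, {x} ∈ contIdeal) := by
  refine ⟨?_, ?_, ?_⟩
  · intro X Y hYX hX F hF hFY
    exact hX F hF (Set.eq_univ_of_univ_subset (hFY ▸ Set.image_mono (f := F) hYX))
  · intro X hX F hF hU
    -- the n-th coordinate projection under the pairing homeomorphism 2^ω ≅ (2^ω)^ℕ
    have hcont : ∀ n : ℕ, Continuous (fun x : ℕ → Bool => fun k => x (Nat.pair n k)) :=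
      fun n => continuous_pi fun k => continuous_apply _
    have hz : ∀ n : ℕ, ∃ z : ℕ → Bool,
        z ∉ (fun x => fun k => F x (Nat.pair n k)) '' (X n) := by
      intro n
      have := hX n (fun x => fun k => F x (Nat.pair n k)) ((hcont n).comp hF)
      exact Set.not_subset.1 (fun h => this (Set.eq_univ_of_univ_subset h)) |>.imp
        fun z hz2 => hz2.2
    choose z hzn using hz
    set y : ℕ → Bool := fun m => z m.unpair.1 m.unpair.2 with hy
    have hyU : y ∈ F '' ⋃ n, X n := hU ▸ Set.mem_univ y
    obtain ⟨x, hx, hFx⟩ := hyU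
    obtain ⟨n, hxn⟩ := Set.mem_iUnion.1 hx
    apply hzn n
    refine ⟨x, hxn, ?_⟩
    funext k
    show F x (Nat.pair n k) = z n k
    rw [hFx, hy]
    simp [Nat.unpair_pair]
  · intro x F hF h
    have hb : (fun k => !(F x k)) ∈ F '' {x} := h ▸ Set.mem_univ _
    obtain ⟨w, hw, hFw⟩ := hb
    rw [Set.mem_singleton_iff] at hw
    subst hw
    have := congrFun hFw 0
    simp at this
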